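/- Under the change of variable z = sech²(s), the equation y''(s) - (1/4)(1 + 4ω² - 3z)y = 0 becomes the hypergeometric-type equation y''(z) + (1/z + (1/2)/(z-1)) y'(z) + ((-1/16 - ω²/4)/z² + (-1/8 + ω²/4)/(z(z-1))) y(z) = 0. -/

import Mathlib

/-- The change of variable `z = sech²(s)` transforms
`y'' - (1/4)(1 + 4ω² - 3z) y = 0` into a hypergeometric-type rational equation. -/
theorem algebrization_sech
    (ω2 : ℂ) (Y : ℝ → ℂ)
    (hY : Differentiable ℝ Y) (hY' : Differentiable ℝ (deriv Y))
    (y : ℝ → ℂ) (hy : y = fun s => Y (((Real.cosh s)⁻¹) ^ 2))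
    (s : ℝ) (hs : 0 < s) :
    (deriv (deriv y) s
        - (1 / 4) * (1 + 4 * ω2 - 3 * (((Real.cosh s)⁻¹ ^ 2 : ℝ) : ℂ)) * y s = 0)
      ↔ (deriv (deriv Y) ((Real.cosh s)⁻¹ ^ 2)
          + (1 / ((((Real.cosh s)⁻¹ ^ 2 : ℝ) : ℂ))
              + (1 / 2) / ((((Real.cosh s)⁻¹ ^ 2 : ℝ) : ℂ) - 1))
            * deriv Y ((Real.cosh s)⁻¹ ^ 2)
          + ((-1 / 16 - ω2 / 4) / ((((Real.cosh s)⁻¹ ^ 2 : ℝ) : ℂ)) ^ 2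
              + (-1 / 8 + ω2 / 4)
                / ((((Real.cosh s)⁻¹ ^ 2 : ℝ) : ℂ)
                    * (((( Real.cosh s)⁻¹ ^ 2 : ℝ) : ℂ) - 1)))
            * Y ((Real.cosh s)⁻¹ ^ 2)
          = 0) := by
  have hc : ∀ x : ℝ, Real.cosh x ≠ 0 := fun x => (Real.cosh_pos x).ne'
  set g : ℝ → ℝ := fun x => ((Real.cosh x)⁻¹) ^ 2 with hgdef
  set g1 : ℝ → ℝ := fun x => -2 * Real.sinh x * ((Real.cosh x)⁻¹) ^ 3 with hg1def
  have hgd : ∀ x, HasDerivAt g (g1 x) x := by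
    intro x
    have h := ((Real.hasDerivAt_cosh x).fun_inv (hc x)).fun_pow 2
    refine h.congr_deriv ?_
    symm
    simp only [hg1def]
    push_cast
    ring
  have hg1d : ∀ x, HasDerivAt g1 (4 * g x - 6 * (g x) ^ 2) x := by
    intro x
    have h1 : HasDerivAt (fun x => -2 * Real.sinh x) (-2 * Real.cosh x) x :=
      (Real.hasDerivAt_sinh x).const_mul (-2)
    have h2 : HasDerivAt (fun x => ((Real.cosh x)⁻¹) ^ 3)
        (3 * ((Real.cosh x)⁻¹) ^ 2 * (-(Real.sinh x) / (Real.cosh x) ^ 2)) x := by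
      simpa using ((Real.hasDerivAt_cosh x).fun_inv (hc x)).fun_pow 3
    have h := h1.fun_mul h2
    refine h.congr_deriv ?_
    symm
    have hsq : Real.sinh x ^ 2 = Real.cosh x ^ 2 - 1 := by
      have := Real.cosh_sq x; linarith
    simp only [hgdef]
    field_simp
    linear_combination (-6) * hsq
  -- first derivative of y
  set y1 : ℝ → ℂ := fun x => (g1 x : ℂ) * deriv Y (g x) with hy1def
  have hyd : ∀ x, HasDerivAt y (y1 x) x := by
    intro x
    have h := (hY (g x)).hasDerivAt.scomp x (hgd x)
    simp only [hy, hy1def, Function.comp, Complex.real_smul] at h ⊢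
    exact h
  have hderiv_y : deriv y = y1 := funext fun x => (hyd x).deriv
  -- second derivative
  have h1 : HasDerivAt (fun x => ((g1 x : ℝ) : ℂ)) ((4 * g s - 6 * (g s) ^ 2 : ℝ) : ℂ) s :=
    (hg1d s).ofReal_comp
  have h2 : HasDerivAt (fun x => deriv Y (g x)) ((g1 s : ℂ) * deriv (deriv Y) (g s)) s := by
    have h := (hY' (g s)).hasDerivAt.scomp s (hgd s)
    simpa [Function.comp_def, Complex.real_smul] using h
  have hy1d : HasDerivAt y1
      (((4 * g s - 6 * (g s) ^ 2 : ℝ) : ℂ) * deriv Y (g s)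
        + (g1 s : ℂ) * ((g1 s : ℂ) * deriv (deriv Y) (g s))) s := h1.mul h2
  have hddy : deriv (deriv y) s
      = ((4 * g s - 6 * (g s) ^ 2 : ℝ) : ℂ) * deriv Y (g s)
        + (g1 s : ℂ) * ((g1 s : ℂ) * deriv (deriv Y) (g s)) := by
    rw [hderiv_y]; exact hy1d.deriv
  -- facts about z = g s
  have hzpos : 0 < g s := by positivity
  have hzlt : g s < 1 := by
    have h1 : 1 < Real.cosh s := Real.one_lt_cosh.2 hs.ne'
    have : (Real.cosh s)⁻¹ < 1 := by
      rw [inv_lt_one_iff₀]; right; exact h1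
    calc ((Real.cosh s)⁻¹) ^ 2 < 1 ^ 2 := by
          apply pow_lt_pow_left₀ this (by positivity) (by norm_num)
      _ = 1 := one_pow 2
  have hz0 : ((g s : ℝ) : ℂ) ≠ 0 := by exact_mod_cast hzpos.ne'
  have hz1 : ((g s : ℝ) : ℂ) - 1 ≠ 0 := by
    rw [sub_ne_zero]
    exact_mod_cast hzlt.ne
  have hg1sq : (g1 s : ℂ) ^ 2 = 4 * ((g s : ℝ) : ℂ) ^ 2 - 4 * ((g s : ℝ) : ℂ) ^ 3 := by
    have hr : (g1 s) ^ 2 = 4 * (g s) ^ 2 - 4 * (g s) ^ 3 := by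
      have hsq : Real.sinh s ^ 2 = Real.cosh s ^ 2 - 1 := by
        have := Real.cosh_sq s; linarith
      simp only [hg1def, hgdef]
      field_simp
      linear_combination 4 * hsq
    exact_mod_cast congrArg (fun t : ℝ => (t : ℂ)) hr
  -- abbreviations
  set z : ℂ := ((g s : ℝ) : ℂ) with hzdef
  set A : ℂ := deriv (deriv Y) (g s) with hA
  set B : ℂ := deriv Y (g s) with hB
  set C : ℂ := Y (g s) with hC
  have hys : y s = C := by rw [hy]
  have hc2 : ((4 * g s - 6 * (g s) ^ 2 : ℝ) : ℂ) = 4 * z - 6 * z ^ 2 := by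
    push_cast
    rw [hzdef]
  have key : ((4 * g s - 6 * (g s) ^ 2 : ℝ) : ℂ) * B + (g1 s : ℂ) * ((g1 s : ℂ) * A)
        - (1 / 4) * (1 + 4 * ω2 - 3 * z) * C
      = (4 * z ^ 2 * (1 - z)) *
        (A + (1 / z + (1 / 2) / (z - 1)) * B
          + ((-1 / 16 - ω2 / 4) / z ^ 2 + (-1 / 8 + ω2 / 4) / (z * (z - 1))) * C) := by
    have hgg : (g1 s : ℂ) * ((g1 s : ℂ) * A) = (4 * z ^ 2 - 4 * z ^ 3) * A := by
      rw [← mul_assoc, ← sq, hg1sq]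
    have e1 : 4 * z ^ 2 * (1 - z) * (1 / z + (1 / 2) / (z - 1)) = 4 * z - 6 * z ^ 2 := by
      field_simp
      ring
    have e2 : 4 * z ^ 2 * (1 - z) * ((-1 / 16 - ω2 / 4) / z ^ 2 + (-1 / 8 + ω2 / 4) / (z * (z - 1)))
        = -(1 / 4) * (1 + 4 * ω2 - 3 * z) := by
      field_simp
      ring
    have expand : (4 * z ^ 2 * (1 - z)) *
        (A + (1 / z + (1 / 2) / (z - 1)) * B
          + ((-1 / 16 - ω2 / 4) / z ^ 2 + (-1 / 8 + ω2 / 4) / (z * (z - 1))) * C)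
      = 4 * z ^ 2 * (1 - z) * A
        + (4 * z ^ 2 * (1 - z) * (1 / z + (1 / 2) / (z - 1))) * B
        + (4 * z ^ 2 * (1 - z)
            * ((-1 / 16 - ω2 / 4) / z ^ 2 + (-1 / 8 + ω2 / 4) / (z * (z - 1)))) * C := by
      ring
    rw [hgg, hc2, expand, e1, e2]
    ring
  rw [hddy, hys, key]
  constructor
  · intro h
    rcases mul_eq_zero.mp h with h' | h'
    · exfalso
      have : (4 : ℂ) * z ^ 2 * (1 - z) ≠ 0 := by
        apply mul_ne_zero (mul_ne_zero (by norm_num) (pow_ne_zero 2 hz0))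
        intro hzz
        apply hz1
        have : z = 1 := by linear_combination -hzz
        rw [this]; ring
      exact this h'
    · exact h'
  · intro h
    rw [h, mul_zero]
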